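/- For every integer h ≥ 1, the undirected optical index of the complete binary tree of height h is at least 5·2^{2h−2} − 3·2^h + 1. -/

import Mathlib

open SimpleGraph

/-- An all-to-all routing in a simple graph `G`: a choice of one path between each
(unordered) pair of vertices. -/
structure Routing {V : Type*} (G : SimpleGraph V) where
  path : ∀ u v : V, G.Walk u v
  isPath : ∀ u v : V, (path u v).IsPath
  symm : ∀ u v : V, path v u = (path u v).reverse

/-- The conflict graph of a routing: vertices are unordered pairs of distinct vertices of `G`
(i.e. the paths of the routing), two of them adjacent iff the corresponding paths share an
edge. -/
def Routing.conflictGraph {V : Type*} {G : SimpleGraph V} (R : Routing G) :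
    SimpleGraph {p : Sym2 V // ¬ p.IsDiag} where
  Adj p q := p ≠ q ∧ ∃ (u v u' v' : V) (e : Sym2 V),
      (p : Sym2 V) = s(u, v) ∧ (q : Sym2 V) = s(u', v') ∧
      e ∈ (R.path u v).edges ∧ e ∈ (R.path u' v').edges
  symm := ⟨by
    rintro p q ⟨hne, u, v, u', v', e, hp, hq, h1, h2⟩
    exact ⟨hne.symm, u', v', u, v, e, hq, hp, h2, h1⟩⟩
  loopless := ⟨by
    rintro p ⟨hne, -⟩
    exact hne rfl⟩

/-- The undirected optical index `w(G)`: the minimum over all all-to-all routings `R`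
of the chromatic number of the conflict graph `Q(R)`. -/
noncomputable def opticalIndex {V : Type*} (G : SimpleGraph V) : ℕ :=
  sInf {n | ∃ R : Routing G, R.conflictGraph.Colorable n}

/-- The load of an edge `e` under a routing: the number of paths of the routing
containing `e`. -/
noncomputable def Routing.load {V : Type*} {G : SimpleGraph V} (R : Routing G)
    (e : Sym2 V) : ℕ :=
  Nat.card {p : {p : Sym2 V // ¬ p.IsDiag} //
    ∃ u v : V, (p : Sym2 V) = s(u, v) ∧ e ∈ (R.path u v).edges}

/-- The edge-forwarding index `π(G)`: the minimum over all all-to-all routings of the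
maximum edge load. -/
noncomputable def forwardingIndex {V : Type*} (G : SimpleGraph V) : ℕ :=
  sInf {n | ∃ R : Routing G, ∀ e ∈ G.edgeSet, R.load e ≤ n}

/-- The complete `m`-ary tree of height `h`: vertices are words over `Fin m` of length
at most `h` (the root is the empty word), a vertex being adjacent to its parent. -/
def completeMAryTree (m h : ℕ) : SimpleGraph {l : List (Fin m) // l.length ≤ h} where
  Adj x y := (∃ a : Fin m, x.val = a :: y.val) ∨ (∃ a : Fin m, y.val = a :: x.val)
  symm := ⟨fun x y hxy => Or.symm hxy⟩
  loopless := ⟨by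
    rintro x (⟨a, ha⟩ | ⟨a, ha⟩) <;> exact List.cons_ne_self a x.val ha.symm⟩

/-- The tree `D_{m,h}`: two disjoint copies of the complete `m`-ary tree of height `h-1`
with an edge joining the two roots. -/
def doubleMAryTree (m h : ℕ) :
    SimpleGraph (Bool × {l : List (Fin m) // l.length ≤ h - 1}) where
  Adj x y := (x.1 = y.1 ∧ ((∃ a : Fin m, x.2.val = a :: y.2.val) ∨
      (∃ a : Fin m, y.2.val = a :: x.2.val)))
    ∨ (x.1 ≠ y.1 ∧ x.2.val = [] ∧ y.2.val = [])
  symm := ⟨by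
    rintro x y (⟨hb, hxy⟩ | ⟨hb, h1, h2⟩)
    · exact Or.inl ⟨hb.symm, Or.symm hxy⟩
    · exact Or.inr ⟨hb.symm, h2, h1⟩⟩
  loopless := ⟨by
    rintro x (⟨-, (⟨a, ha⟩ | ⟨a, ha⟩)⟩ | ⟨hb, -⟩)
    · exact List.cons_ne_self a _ ha.symm
    · exact List.cons_ne_self a _ ha.symm
    · exact hb rfl⟩


namespace OptAux

abbrev BV (h : ℕ) := {l : List (Fin 2) // l.length ≤ h}

/-! ### Fintype and cardinality of `BV` -/

def bvEquiv (k : ℕ) : BV (k+1) ≃ Option (Fin 2 × BV k) where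
  toFun l := match l with
    | ⟨[], _⟩ => none
    | ⟨c :: t, hl⟩ => some (c, ⟨t, by simp only [List.length_cons] at hl; omega⟩)
  invFun o := match o with
    | none => ⟨[], by simp⟩
    | some (c, t) => ⟨c :: t.val, by simp only [List.length_cons]; have := t.2; omega⟩
  left_inv := by rintro ⟨(_|⟨c,t⟩), hl⟩ <;> rfl
  right_inv := by rintro (_|⟨c,t⟩) <;> rfl

instance : Unique (BV 0) := by
  refine ⟨⟨⟨[], by simp⟩⟩, ?_⟩
  rintro ⟨(_|⟨c,t⟩), hl⟩
  · rfl
  · simp at hl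

def fintypeBV : (k : ℕ) → Fintype (BV k)
  | 0 => inferInstance
  | (k+1) => letI := fintypeBV k; Fintype.ofEquiv _ (bvEquiv k).symm

attribute [instance] fintypeBV

lemma card_bv : ∀ k, Fintype.card (BV k) = 2 ^ (k+1) - 1
  | 0 => by simp
  | (k+1) => by
      rw [show (fintypeBV (k+1)) = Fintype.ofEquiv _ (bvEquiv k).symm from rfl]
      rw [Fintype.ofEquiv_card]
      simp only [Fintype.card_option, Fintype.card_prod, Fintype.card_fin, card_bv k]
      have := Nat.one_le_two_pow (n := k+1)
      rw [pow_succ]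
      omega

/-! ### suffix helper lemmas -/

lemma not_suffix_same_length {s t : List (Fin 2)} (l : List (Fin 2))
    (hlen : s.length = t.length) (hne : s ≠ t) : ¬ s <:+ l ++ t := by
  rintro ⟨w, hw⟩
  exact hne (List.append_inj' hw hlen).2

lemma not_suffix_concat {c d : Fin 2} {s : List (Fin 2)} (l : List (Fin 2))
    (hne : c ≠ d) : ¬ (s ++ [c]) <:+ (l ++ [d]) := by
  rintro ⟨w, hw⟩
  rw [← List.append_assoc] at hw
  have := (List.append_inj' hw rfl).2
  simp only [List.cons.injEq] at this
  exact hne this.1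

/-! ### The cut lemma: any walk from the `p`-side to the non-`p`-side uses edge `(p, p.tail)` -/

lemma cut_mem_edges {h : ℕ} (p : List (Fin 2)) (hl : p.length ≤ h) (hlt : p.tail.length ≤ h)
    {u v : BV h} (W : (completeMAryTree 2 h).Walk u v)
    (hu : p <:+ u.val) (hv : ¬ p <:+ v.val) :
    s(⟨p, hl⟩, ⟨p.tail, hlt⟩) ∈ W.edges := by
  induction W with
  | nil => exact absurd hu hv
  | @cons a b c hadj W ih =>
    by_cases hb : p <:+ b.val
    · rw [Walk.edges_cons]
      exact List.mem_cons_of_mem _ (ih hb hv)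
    · have hadj' : (∃ x : Fin 2, a.val = x :: b.val) ∨ (∃ x : Fin 2, b.val = x :: a.val) := hadj
      rcases hadj' with ⟨x, hx⟩ | ⟨x, hx⟩
      · rw [hx] at hu
        rcases List.suffix_cons_iff.mp hu with heq | hsuf
        · have ha' : a = ⟨p, hl⟩ := Subtype.ext (hx.trans heq.symm)
          have hb' : b = ⟨p.tail, hlt⟩ := Subtype.ext (show b.val = p.tail by rw [heq]; rfl)
          rw [Walk.edges_cons]
          exact List.mem_cons.mpr (Or.inl (by rw [ha', hb']))
        · exact absurd hsuf hb
      · exact absurd (show p <:+ b.val by rw [hx]; exact hu.trans (List.suffix_cons x a.val)) hb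

/-! ### A routing exists -/

def toRoot {h : ℕ} : (l : List (Fin 2)) → (hl : l.length ≤ h) →
    (completeMAryTree 2 h).Walk ⟨l, hl⟩ ⟨[], by simp⟩
  | [], _ => Walk.nil
  | c :: t, hl =>
      Walk.cons
        (show (completeMAryTree 2 h).Adj ⟨c::t, hl⟩ ⟨t, by simp only [List.length_cons] at hl; omega⟩
          from Or.inl ⟨c, rfl⟩)
        (toRoot t _)

noncomputable def routing (h : ℕ) : Routing (completeMAryTree 2 h) := by
  classical
  let key : BV h → ℕ := fun v => Encodable.encode v
  have keyinj : Function.Injective key := fun x y hxy => Encodable.encode_injective hxy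
  let W : ∀ u v : BV h, (completeMAryTree 2 h).Walk u v := fun u v =>
    (toRoot u.val u.2).append (toRoot v.val v.2).reverse
  exact {
    path := fun u v => if key u ≤ key v then (W u v).bypass else ((W v u).bypass).reverse
    isPath := fun u v => by
      by_cases hle : key u ≤ key v
      · simp only [if_pos hle]; exact Walk.bypass_isPath _
      · simp only [if_neg hle]; exact (Walk.bypass_isPath _).reverse
    symm := fun u v => by
      show (if key v ≤ key u then (W v u).bypass else (W u v).bypass.reverse) =
        (if key u ≤ key v then (W u v).bypass else (W v u).bypass.reverse).reverse
      split_ifs with h1 h2 h3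
      · have huv : u = v := keyinj (le_antisymm h2 h1)
        subst huv
        have hnil : (W u u).bypass = Walk.nil :=
          Walk.isPath_iff_eq_nil.mp (Walk.bypass_isPath _)
        rw [hnil]; rfl
      · exact (Walk.reverse_reverse _).symm
      · rfl
      · rcases le_total (key u) (key v) with hle | hle
        · exact absurd hle h3
        · exact absurd hle h1 }

lemma sInf_set_nonempty (h : ℕ) :
    {n | ∃ R : Routing (completeMAryTree 2 h), R.conflictGraph.Colorable n}.Nonempty := by
  classical
  exact ⟨_, routing h, colorable_of_fintype _⟩

end OptAux
namespace OptAux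

section Main

variable {k : ℕ}

def vA (p : BV (k+1)) : BV (k+2) :=
  ⟨p.val ++ [0], by have := p.2; simp only [List.length_append, List.length_cons,
    List.length_nil]; omega⟩

def vNA : Option (BV (k+1)) → BV (k+2)
  | none => ⟨[], by simp⟩
  | some q => ⟨q.val ++ [1], by have := q.2; simp only [List.length_append, List.length_cons, List.length_nil]; omega⟩

def vA1 (p : BV k) : BV (k+2) :=
  ⟨p.val ++ [0,0], by have := p.2; simp only [List.length_append, List.length_cons,
    List.length_nil]; omega⟩

def vA2 (p : BV k) : BV (k+2) :=
  ⟨p.val ++ [1,0], by have := p.2; simp only [List.length_append, List.length_cons,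
    List.length_nil]; omega⟩

lemma suffix_vA (p : BV (k+1)) : [0] <:+ (vA p).val := List.suffix_append _ _

lemma suffix_vA1 (p : BV k) : [0,0] <:+ (vA1 p).val := List.suffix_append _ _

lemma suffix_vA2 (p : BV k) : [1,0] <:+ (vA2 p).val := List.suffix_append _ _

lemma suffix0_vA1 (p : BV k) : [0] <:+ (vA1 p).val :=
  (show ([0]:List (Fin 2)) <:+ [0,0] from ⟨[0], rfl⟩).trans (suffix_vA1 p)

lemma suffix0_vA2 (p : BV k) : [0] <:+ (vA2 p).val :=
  (show ([0]:List (Fin 2)) <:+ [1,0] from ⟨[1], rfl⟩).trans (suffix_vA2 p)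

lemma not_suffix0_vNA (o : Option (BV (k+1))) : ¬ ([0]:List (Fin 2)) <:+ (vNA o).val := by
  cases o with
  | none => simp [vNA, List.suffix_nil]
  | some q => exact fun hs => not_suffix_concat (c := 0) (d := 1) (s := []) q.val (by decide) (by simpa [vNA] using hs)

lemma not_suffix00_vNA (o : Option (BV (k+1))) : ¬ ([0,0]:List (Fin 2)) <:+ (vNA o).val := by
  cases o with
  | none => simp [vNA, List.suffix_nil]
  | some q => exact fun hs => not_suffix_concat (c := 0) (d := 1) (s := [0]) q.val (by decide) (by simpa [vNA] using hs)

lemma not_suffix10_vNA (o : Option (BV (k+1))) : ¬ ([1,0]:List (Fin 2)) <:+ (vNA o).val := by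
  cases o with
  | none => simp [vNA, List.suffix_nil]
  | some q => exact fun hs => not_suffix_concat (c := 0) (d := 1) (s := [1]) q.val (by decide) (by simpa [vNA] using hs)

lemma not_suffix00_vA2 (q : BV k) : ¬ ([0,0]:List (Fin 2)) <:+ (vA2 q).val :=
  not_suffix_same_length q.val rfl (by decide)

lemma not_suffix10_vA1 (p : BV k) : ¬ ([1,0]:List (Fin 2)) <:+ (vA1 p).val :=
  not_suffix_same_length p.val rfl (by decide)

lemma ndiag1 (p : BV (k+1)) (o : Option (BV (k+1))) :
    ¬ (s(vA p, vNA o) : Sym2 (BV (k+2))).IsDiag := by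
  rw [Sym2.mk_isDiag_iff]
  intro hd
  exact not_suffix0_vNA o (hd ▸ suffix_vA p)

lemma ndiag3 (p q : BV k) : ¬ (s(vA1 p, vA2 q) : Sym2 (BV (k+2))).IsDiag := by
  rw [Sym2.mk_isDiag_iff]
  intro hd
  exact not_suffix00_vA2 q (hd ▸ suffix_vA1 p)

def sig1 (i : BV (k+1) × Option (BV (k+1))) : {p : Sym2 (BV (k+2)) // ¬ p.IsDiag} :=
  ⟨s(vA i.1, vNA i.2), ndiag1 i.1 i.2⟩

def sig3 (i : BV k × BV k) : {p : Sym2 (BV (k+2)) // ¬ p.IsDiag} :=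
  ⟨s(vA1 i.1, vA2 i.2), ndiag3 i.1 i.2⟩

lemma vA_inj : Function.Injective (vA (k := k)) := by
  intro p p' hpp
  exact Subtype.ext (List.append_inj' (congrArg Subtype.val hpp) rfl).1

lemma vNA_inj : Function.Injective (vNA (k := k)) := by
  rintro (_|q) (_|q') hqq
  · rfl
  · exact absurd (congrArg Subtype.val hqq) (by simp [vNA])
  · exact absurd (congrArg Subtype.val hqq) (by simp [vNA])
  · exact congrArg some (Subtype.ext (List.append_inj' (congrArg Subtype.val hqq) rfl).1)

lemma vA1_inj : Function.Injective (vA1 (k := k)) := by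
  intro p p' hpp
  exact Subtype.ext (List.append_inj' (congrArg Subtype.val hpp) rfl).1

lemma vA2_inj : Function.Injective (vA2 (k := k)) := by
  intro p p' hpp
  exact Subtype.ext (List.append_inj' (congrArg Subtype.val hpp) rfl).1

lemma sig1_inj : Function.Injective (sig1 (k := k)) := by
  rintro ⟨p, o⟩ ⟨p', o'⟩ hss
  have h2 := congrArg Subtype.val hss
  simp only [sig1] at h2
  rw [Sym2.eq_iff] at h2
  rcases h2 with ⟨h3, h4⟩ | ⟨h3, h4⟩
  · rw [Prod.mk.injEq]
    exact ⟨vA_inj h3, vNA_inj h4⟩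
  · exact absurd (h3 ▸ suffix_vA p) (not_suffix0_vNA o')

lemma sig3_inj : Function.Injective (sig3 (k := k)) := by
  rintro ⟨p, q⟩ ⟨p', q'⟩ hss
  have h2 := congrArg Subtype.val hss
  simp only [sig3] at h2
  rw [Sym2.eq_iff] at h2
  rcases h2 with ⟨h3, h4⟩ | ⟨h3, h4⟩
  · rw [Prod.mk.injEq]
    exact ⟨vA1_inj h3, vA2_inj h4⟩
  · exact absurd (h3 ▸ suffix_vA1 p) (not_suffix00_vA2 q')

def edgeA : Sym2 (BV (k+2)) := s(⟨[0], by simp⟩, ⟨[], by simp⟩)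
def edgeA1 : Sym2 (BV (k+2)) := s(⟨[0,0], by simp⟩, ⟨[0], by simp⟩)
def edgeA2 : Sym2 (BV (k+2)) := s(⟨[1,0], by simp⟩, ⟨[0], by simp⟩)

variable (R : Routing (completeMAryTree 2 (k+2)))

lemma edgeA_mem (u v : BV (k+2)) (hu : [0] <:+ u.val) (hv : ¬ [0] <:+ v.val) :
    edgeA (k := k) ∈ (R.path u v).edges :=
  cut_mem_edges [0] (by simp) (by simp) (R.path u v) hu hv

lemma edgeA1_mem (u v : BV (k+2)) (hu : [0,0] <:+ u.val) (hv : ¬ [0,0] <:+ v.val) :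
    edgeA1 (k := k) ∈ (R.path u v).edges :=
  cut_mem_edges [0,0] (by simp) (by simp) (R.path u v) hu hv

lemma edgeA2_mem (u v : BV (k+2)) (hu : [1,0] <:+ u.val) (hv : ¬ [1,0] <:+ v.val) :
    edgeA2 (k := k) ∈ (R.path u v).edges :=
  cut_mem_edges [1,0] (by simp) (by simp) (R.path u v) hu hv

variable {n : ℕ} (C : R.conflictGraph.Coloring (Fin n))

lemma color1_inj : Function.Injective (fun i => C (sig1 (k := k) i)) := by
  intro i j hCij
  by_contra hij
  have hs : sig1 i ≠ sig1 j := fun hh => hij (sig1_inj hh)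
  exact C.valid ⟨hs, vA i.1, vNA i.2, vA j.1, vNA j.2, edgeA, rfl, rfl,
    edgeA_mem R _ _ (suffix_vA _) (not_suffix0_vNA _),
    edgeA_mem R _ _ (suffix_vA _) (not_suffix0_vNA _)⟩ hCij

lemma color3_inj : Function.Injective (fun i => C (sig3 (k := k) i)) := by
  intro i j hCij
  by_contra hij
  have hs : sig3 i ≠ sig3 j := fun hh => hij (sig3_inj hh)
  exact C.valid ⟨hs, vA1 i.1, vA2 i.2, vA1 j.1, vA2 j.2, edgeA1, rfl, rfl,
    edgeA1_mem R _ _ (suffix_vA1 _) (not_suffix00_vA2 _),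
    edgeA1_mem R _ _ (suffix_vA1 _) (not_suffix00_vA2 _)⟩ hCij

lemma step5 (p q : BV k) (p' : BV (k+1)) (o' : Option (BV (k+1)))
    (hC : C (sig3 (p, q)) = C (sig1 (p', o'))) : p'.val = [] := by
  have hne : sig3 (p, q) ≠ sig1 (p', o') := by
    intro hs
    have h2 := congrArg Subtype.val hs
    simp only [sig1, sig3] at h2
    rw [Sym2.eq_iff] at h2
    rcases h2 with ⟨h3, h4⟩ | ⟨h3, h4⟩
    · exact not_suffix0_vNA o' (h4 ▸ suffix0_vA2 q)
    · exact not_suffix0_vNA o' (h3 ▸ suffix0_vA1 p)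
  have hnadj : ¬ R.conflictGraph.Adj (sig3 (p, q)) (sig1 (p', o')) := fun hA => C.valid hA hC
  rcases List.eq_nil_or_concat p'.val with hnil | ⟨p'', c, hc⟩
  · exact hnil
  · exfalso
    rw [List.concat_eq_append] at hc
    rcases (by decide : ∀ x : Fin 2, x = 0 ∨ x = 1) c with rfl | rfl
    · apply hnadj
      refine ⟨hne, vA1 p, vA2 q, vA p', vNA o', edgeA1, rfl, rfl, ?_, ?_⟩
      · exact edgeA1_mem R _ _ (suffix_vA1 p) (not_suffix00_vA2 q)
      · refine edgeA1_mem R _ _ ?_ (not_suffix00_vNA o')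
        show [0,0] <:+ p'.val ++ [0]
        rw [hc, List.append_assoc]
        exact List.suffix_append _ _
    · apply hnadj
      refine ⟨hne, vA2 q, vA1 p, vA p', vNA o', edgeA2, Sym2.eq_swap, rfl, ?_, ?_⟩
      · exact edgeA2_mem R _ _ (suffix_vA2 q) (not_suffix10_vA1 p)
      · refine edgeA2_mem R _ _ ?_ (not_suffix10_vNA o')
        show [1,0] <:+ p'.val ++ [0]
        rw [hc, List.append_assoc]
        exact List.suffix_append _ _

end Main

section Count

variable {k : ℕ}

lemma main_count (R : Routing (completeMAryTree 2 (k+2))) {n : ℕ}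
    (C : R.conflictGraph.Coloring (Fin n)) : 5 * (2^(k+1) * 2^(k+1)) + 1 ≤ n + 6 * 2^(k+1) := by
  classical
  set X : Finset (Fin n) := Finset.image (fun i => C (sig1 (k := k) i)) Finset.univ with hX
  set Z : Finset (Fin n) := Finset.image (fun i => C (sig3 (k := k) i)) Finset.univ with hZ
  set g : Option (BV (k+1)) → Fin n := fun o => C (sig1 (⟨[], by simp⟩, o)) with hg
  have hXZ : X ∩ Z ⊆ Finset.image g Finset.univ := by
    intro γ hγ
    rw [Finset.mem_inter] at hγ
    obtain ⟨hmX, hmZ⟩ := hγ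
    rw [Finset.mem_image] at hmX hmZ ⊢
    obtain ⟨⟨p', o'⟩, -, h1⟩ := hmX
    obtain ⟨⟨p, q⟩, -, h3⟩ := hmZ
    have hCC : C (sig3 (p, q)) = C (sig1 (p', o')) := h3.trans h1.symm
    have hnil := step5 R C p q p' o' hCC
    have hp' : p' = ⟨[], by simp⟩ := Subtype.ext hnil
    refine ⟨o', Finset.mem_univ _, ?_⟩
    rw [hg, ← h1, hp']
  have h1B : 1 ≤ 2^(k+1) := Nat.one_le_two_pow
  obtain ⟨c, hc⟩ : ∃ c, 2^(k+1) = c + 1 := ⟨2^(k+1) - 1, by omega⟩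
  have e1 : X.card + 2 * 2^(k+1) = 4 * (2^(k+1) * 2^(k+1)) := by
    rw [hX, Finset.card_image_of_injective _ (color1_inj R C), Finset.card_univ,
      Fintype.card_prod, Fintype.card_option, card_bv]
    have h2 : (2:ℕ)^(k+1+1) = 2 * 2^(k+1) := by rw [pow_succ]; ring
    rw [h2, hc]
    have h3 : 2 * (c+1) - 1 = 2*c + 1 := by omega
    rw [h3]
    ring
  have e2 : Z.card + 2 * 2^(k+1) = 2^(k+1) * 2^(k+1) + 1 := by
    rw [hZ, Finset.card_image_of_injective _ (color3_inj R C), Finset.card_univ,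
      Fintype.card_prod, card_bv, hc]
    have h3 : c + 1 - 1 = c := by omega
    rw [h3]
    ring
  have e3 : (X ∪ Z).card ≤ n := by
    calc (X ∪ Z).card ≤ (Finset.univ : Finset (Fin n)).card := Finset.card_le_univ _
    _ = n := by simp
  have e4 : (X ∩ Z).card ≤ 2 * 2^(k+1) := by
    calc (X ∩ Z).card ≤ (Finset.image g Finset.univ).card := Finset.card_le_card hXZ
    _ ≤ (Finset.univ : Finset (Option (BV (k+1)))).card := Finset.card_image_le
    _ = 2 * 2^(k+1) := by
        rw [Finset.card_univ, Fintype.card_option, card_bv]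
        have h2 : (2:ℕ)^(k+1+1) = 2 * 2^(k+1) := by rw [pow_succ]; ring
        omega
  have e5 := Finset.card_union_add_card_inter X Z
  -- linear arithmetic over the atom P := 2^(k+1) * 2^(k+1) and B := 2^(k+1)
  generalize hP : (2:ℕ)^(k+1) * 2^(k+1) = P at e1 e2 ⊢
  omega

end Count

end OptAux
/-- for every integer `h ≥ 1`, the undirected optical index of the complete
binary tree of height `h` is at least `5·2^(2h−2) − 3·2^h + 1`. -/
theorem opticalIndex_binaryTree_lower (h : ℕ) (hh : 1 ≤ h) :
    5 * 2 ^ (2 * h - 2) - 3 * 2 ^ h + 1 ≤ opticalIndex (completeMAryTree 2 h) := by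
  rcases h with _ | h'
  · omega
  rcases h' with _ | k
  · -- h = 1
    refine le_csInf (OptAux.sInf_set_nonempty 1) ?_
    rintro n ⟨R, hcol⟩
    obtain ⟨C⟩ := hcol
    have hnd : ¬ (s((⟨[0], by simp⟩ : OptAux.BV 1), (⟨[], by simp⟩ : OptAux.BV 1)) :
        Sym2 (OptAux.BV 1)).IsDiag := by
      rw [Sym2.mk_isDiag_iff]
      intro hd
      have := congrArg Subtype.val hd
      simp at this
    have hn : n ≠ 0 := by
      rintro rfl
      exact (C ⟨_, hnd⟩).elim0
    show 5 * 2 ^ (2 * 1 - 2) - 3 * 2 ^ 1 + 1 ≤ n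
    norm_num
    omega
  · -- h = k + 2
    show 5 * 2 ^ (2 * (k+2) - 2) - 3 * 2 ^ (k+2) + 1 ≤
      opticalIndex (completeMAryTree 2 (k+2))
    refine le_csInf (OptAux.sInf_set_nonempty (k+2)) ?_
    rintro n ⟨R, hcol⟩
    obtain ⟨C⟩ := hcol
    have key := OptAux.main_count R C
    have hpow : (2:ℕ) ^ (2 * (k+2) - 2) = 2^(k+1) * 2^(k+1) := by
      rw [show 2 * (k+2) - 2 = (k+1) + (k+1) by omega, pow_add]
    have h2 : (2:ℕ)^(k+2) = 2 * 2^(k+1) := by rw [pow_succ]; ring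
    rw [hpow, h2]
    have h1b : (1:ℕ) ≤ 2^k := Nat.one_le_two_pow
    have hPge : 2 * 2^(k+1) ≤ 2^(k+1) * 2^(k+1) :=
      mul_le_mul_left (by omega : (2:ℕ) ≤ 2^(k+1)) _
    generalize hP : (2:ℕ)^(k+1) * 2^(k+1) = P at key hPge ⊢
    omega
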